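/- arXiv:1810.02142 — 10 statements merged into one kernel-verified Lean document; each statement's English description precedes it below -/
import Mathlib

section
/- For all sequential propositional statements P and Q, se(¬(P ∧' Q)) = se(¬P ∨' ¬Q), i.e., the sequential De Morgan law holds under short-circuit evaluation semantics. -/
inductive ETree (A : Type*) : Type _
  | T : ETree A
  | F : ETree A
  | node : ETree A → A → ETree A → ETree A

/-- Leaf replacement: `X.repl Y Z = X[T↦Y, F↦Z]`. -/
def ETree.repl {A : Type*} : ETree A → ETree A → ETree A → ETree A
  | .T, y, _ => y
  | .F, _, z => z
  | .node l a r, y, z => .node (l.repl y z) a (r.repl y z)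
inductive SeqProp (A : Type*) : Type _
  | atom : A → SeqProp A
  | T : SeqProp A
  | F : SeqProp A
  | neg : SeqProp A → SeqProp A
  | and : SeqProp A → SeqProp A → SeqProp A
  | or : SeqProp A → SeqProp A → SeqProp A

/-- Short-circuit evaluation function. -/
def se {A : Type*} : SeqProp A → ETree A
  | .T => .T
  | .F => .F
  | .atom a => .node .T a .F
  | .neg P => (se P).repl .F .T
  | .and P Q => (se P).repl (se Q) .F
  | .or P Q => (se P).repl .T (se Q)

lemma ETree.repl_repl {A : Type*} (x y z y' z' : ETree A) :
    (x.repl y z).repl y' z' = x.repl (y.repl y' z') (z.repl y' z') := by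
  induction x with
  | T => rfl
  | F => rfl
  | node l a r ihl ihr => simp [ETree.repl, ihl, ihr]

theorem se_deMorgan {A : Type*} (P Q : SeqProp A) :
    se (SeqProp.neg (SeqProp.and P Q)) = se (SeqProp.or (SeqProp.neg P) (SeqProp.neg Q)) := by
  simp [se, ETree.repl_repl, ETree.repl]
end

section
/- For all sequential propositional statements P, Q, R, se((P ∧' Q) ∧' R) = se(P ∧' (Q ∧' R)), i.e., sequential conjunction is associative under short-circuit evaluation semantics. -/
theorem se_and_assoc {A : Type*} (P Q R : SeqProp A) :
    se (SeqProp.and (SeqProp.and P Q) R) = se (SeqProp.and P (SeqProp.and Q R)) := by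
  simp [se, ETree.repl_repl, ETree.repl]
end

section
/- For every sequential propositional statement P, se(¬P ∧' F) = se(P ∧' F), i.e., axiom F8 of EqFSCL is valid in the evaluation-tree semantics. -/
lemma repl_aux {A : Type*} (X : ETree A) :
    (X.repl .F .T).repl .F .F = X.repl .F .F := by
  induction X with
  | T => rfl
  | F => rfl
  | node l a r hl hr => simp [ETree.repl, hl, hr]

theorem se_F8 {A : Type*} (P : SeqProp A) :
    se (SeqProp.and (SeqProp.neg P) SeqProp.F) = se (SeqProp.and P SeqProp.F) := by
  simp [se, repl_aux]
end

section
/- For all sequential propositional statements P, Q, se((P ∧' F) ∨' Q) = se((P ∨' T) ∧' Q), i.e., axiom F9 of EqFSCL is valid in the evaluation-tree semantics. -/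
theorem se_F9 {A : Type*} (P Q : SeqProp A) :
    se (SeqProp.or (SeqProp.and P SeqProp.F) Q)
      = se (SeqProp.and (SeqProp.or P SeqProp.T) Q) := by
  simp only [se]
  induction se P with
  | T => rfl
  | F => rfl
  | node l a r ihl ihr => simp [ETree.repl, ihl, ihr]
end

section
/- For all sequential propositional statements P, Q, R, se((P ∧' Q) ∨' (R ∧' F)) = se((P ∨' (R ∧' F)) ∧' (Q ∨' (R ∧' F))), i.e., the restricted right-distributivity axiom F10 of EqFSCL is valid in the evaluation-tree semantics. -/
theorem ETree.repl_repl_s6 {A : Type*} (x a b u v : ETree A) :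
    (x.repl a b).repl u v = x.repl (a.repl u v) (b.repl u v) := by
  induction x with
  | T => rfl
  | F => rfl
  | node l c r ihl ihr => simp [ETree.repl, ihl, ihr]

theorem ETree.replFF {A : Type*} (t u : ETree A) :
    (t.repl .F .F).repl u .F = t.repl .F .F := by
  induction t with
  | T => rfl
  | F => rfl
  | node l c r ihl ihr => simp [ETree.repl, ihl, ihr]

theorem se_F10 {A : Type*} (P Q R : SeqProp A) :
    se (SeqProp.or (SeqProp.and P Q) (SeqProp.and R SeqProp.F))
      = se (SeqProp.and (SeqProp.or P (SeqProp.and R SeqProp.F))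
            (SeqProp.or Q (SeqProp.and R SeqProp.F))) := by
  simp only [se, ETree.repl_repl_s6, ETree.repl, ETree.replFF]
end

section
/- In any equational theory satisfying the EqMSCL axioms (F = ¬T; x ∨' y = ¬(¬x ∧' ¬y); T ∧' x = x; x ∧' (x ∨' y) = x; (x ∨' y) ∧' z = (¬x ∧' (y ∧' z)) ∨' (x ∧' z)), the equation x ∧' x = x (idempotence of sequential conjunction) is derivable. -/
theorem eqmscl_idem_and {M : Type*} (tt ff : M) (neg : M → M) (conj disj : M → M → M)
    (hNeg : ff = neg tt)
    (hOr : ∀ x y, disj x y = neg (conj (neg x) (neg y)))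
    (hTand : ∀ x, conj tt x = x)
    (hAbs : ∀ x y, conj x (disj x y) = x)
    (hMem : ∀ x y z, conj (disj x y) z = disj (conj (neg x) (conj y z)) (conj x z)) :
    ∀ x, conj x x = x := by
  have e13 : ∀ a b c, (conj (neg (conj (neg a) (neg b))) c) = (neg (conj (neg (conj (neg a) (conj b c))) (neg (conj a c)))) := fun a b c => (((congrArg (fun z => (conj z c)) (hOr a b).symm).trans (hMem a b c)).trans (hOr (conj (neg a) (conj b c)) (conj a c)))
  have e5 : ∀ a, tt = (neg (conj (neg tt) (neg a))) := fun a => (((hAbs tt a).symm.trans (hTand (disj tt a))).trans (hOr tt a))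
  have e14 : ∀ a b c, (neg (conj (neg tt) (conj (neg (conj (neg a) (neg b))) c))) = tt := fun a b c => ((congrArg (fun z => (neg (conj (neg tt) z))) (e13 a b c)).trans (e5 (conj (neg (conj (neg a) (conj b c))) (neg (conj a c)))).symm)
  have e7 : ∀ a b, (conj a (neg (conj (neg a) (neg b)))) = a := fun a b => ((congrArg (fun z => (conj a z)) (hOr a b).symm).trans (hAbs a b))
  have e8 : (neg (neg tt)) = tt := ((congrArg (fun z => (neg z)) (e7 (neg tt) tt).symm).trans (e5 (conj (neg (neg tt)) (neg tt))).symm)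
  have e10 : ∀ a, (conj (neg tt) (neg (neg a))) = (neg tt) := fun a => (((congrArg (fun z => (conj (neg tt) (neg z))) (hTand (neg a)).symm).trans (congrArg (fun z => (conj (neg tt) (neg (conj z (neg a))))) (e8).symm)).trans (e7 (neg tt) a))
  have e20 : ∀ a, (neg (neg a)) = a := fun a => (((((((congrArg (fun z => (neg (neg z))) (hTand a).symm).trans (congrArg (fun z => (neg z)) (hTand (neg (conj tt a))).symm)).trans (congrArg (fun z => (neg (conj z (neg (conj tt a))))) (e14 tt tt a).symm)).trans (e13 tt (neg (conj (neg tt) (neg tt))) a).symm).trans (congrArg (fun z => (conj (neg z) a)) (e10 (conj (neg tt) (neg tt))))).trans (congrArg (fun z => (conj z a)) (e8))).trans (hTand a))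
  have e9 : ∀ a, (conj a (neg (neg a))) = a := fun a => ((congrArg (fun z => (conj a (neg z))) (e7 (neg a) tt).symm).trans (e7 a (conj (neg (neg a)) (neg tt))))
  have e25 : ∀ a, (conj a a) = a := fun a => ((congrArg (fun z => (conj a z)) (e20 a).symm).trans (e9 a))
  exact e25
end

section
/- In any equational theory satisfying the EqMSCL axioms, the double negation law ¬¬x = x is derivable. -/
theorem eqmscl_double_neg {M : Type*} (tt ff : M) (neg : M → M) (conj disj : M → M → M)
    (hNeg : ff = neg tt)
    (hOr : ∀ x y, disj x y = neg (conj (neg x) (neg y)))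
    (hTand : ∀ x, conj tt x = x)
    (hAbs : ∀ x y, conj x (disj x y) = x)
    (hMem : ∀ x y z, conj (disj x y) z = disj (conj (neg x) (conj y z)) (conj x z)) :
    ∀ x, neg (neg x) = x := by
  -- T ∨ y = T
  have h1 : ∀ y, disj tt y = tt := fun y => by
    have := hAbs tt y
    rwa [hTand] at this
  -- ¬(F ∧ ¬y) = T
  have h2 : ∀ y, neg (conj ff (neg y)) = tt := fun y => by
    have := hOr tt y
    rw [h1, ← hNeg] at this
    exact this.symm
  -- z = (F ∧ z) ∨ z
  have h3 : ∀ z, z = disj (conj ff z) z := fun z => by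
    have := hMem tt tt z
    rw [h1, ← hNeg] at this; simp only [hTand] at this; exact this
  -- triple negation
  have h4 : ∀ w, neg (neg (neg w)) = neg w := fun w => by
    have := h3 (neg w)
    rw [hOr, h2, hTand] at this
    exact this.symm
  intro x
  have hx : x = neg (conj (neg (conj ff x)) (neg x)) := by
    rw [← hOr]; exact h3 x
  calc neg (neg x) = neg (neg (neg (conj (neg (conj ff x)) (neg x)))) := by rw [← hx]
    _ = neg (conj (neg (conj ff x)) (neg x)) := h4 _
    _ = x := hx.symm
end

section
/- In any equational theory satisfying the four axioms (Or) x ∨' y = ¬(¬x ∧' ¬y), (Abs) x ∧' (x ∨' y) = x, (Mem) (x ∨' y) ∧' z = (¬x ∧' (y ∧' z)) ∨' (x ∧' z), and (Comm) x ∧' y = y ∧' x, the equation (x ∨' ¬x) ∧' y = y is derivable (so x ∨' ¬x acts as a true constant). -/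
theorem sscl_Tdef {M : Type*} (neg : M → M) (conj disj : M → M → M)
    (hOr : ∀ x y, disj x y = neg (conj (neg x) (neg y)))
    (hAbs : ∀ x y, conj x (disj x y) = x)
    (hMem : ∀ x y z, conj (disj x y) z = disj (conj (neg x) (conj y z)) (conj x z))
    (hComm : ∀ x y, conj x y = conj y x) :
    ∀ x y, conj (disj x (neg x)) y = y := by
  have orComm : ∀ a b, disj a b = disj b a := by
    intro a b
    rw [hOr, hOr, hComm]
  have abs2 : ∀ a b, conj a (disj b a) = a := by
    intro a b
    rw [orComm, hAbs]
  have M1 : ∀ x y, disj (conj (neg x) (conj y y)) (conj x y) = y := by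
    intro x y
    rw [← hMem, hComm, abs2]
  have N3 : ∀ a b, conj (conj a b) b = conj a b := by
    intro a b
    have h := abs2 (conj a b) (conj (neg a) (conj b b))
    rwa [M1 a b] at h
  have KEY : ∀ x y, conj (neg x) (conj (neg x) y) = conj (neg x) (conj y y) := by
    intro x y
    calc conj (neg x) (conj (neg x) y)
        = conj (conj y (neg x)) (neg x) := by rw [hComm (neg x) y, hComm]
      _ = conj y (neg x) := N3 y (neg x)
      _ = conj (conj y (disj y x)) (neg x) := by rw [hAbs]
      _ = conj (conj (conj (disj y x) y) y) (neg x) := by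
            rw [N3 (disj y x) y, hComm (disj y x) y]
      _ = conj (conj y y) (neg x) := by rw [hComm (disj y x) y, hAbs]
      _ = conj (neg x) (conj y y) := hComm _ _
  intro x y
  rw [hMem, KEY, M1]
end

section
/- In any model of the axioms CP2 (x ◁ F ▷ y = y), CP3s ((x ◁ y ▷ z) ◁ y ▷ F = y ◁ x ▷ F), and CP4 (x ◁ (y ◁ z ▷ u) ▷ v = (x ◁ y ▷ v) ◁ z ▷ (x ◁ u ▷ v)), the static axiom F ◁ x ▷ F = F and the axiom CP3 (T ◁ x ▷ F = x) are derivable, where CP3 requires also CP1 (x ◁ T ▷ y = x). -/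
theorem cp_alt_derives {M : Type*} (tt ff : M) (cond : M → M → M → M)
    (hCP1 : ∀ x y, cond x tt y = x)
    (hCP2 : ∀ x y, cond x ff y = y)
    (hCP3s : ∀ x y z, cond (cond x y z) y ff = cond y x ff)
    (hCP4 : ∀ x y z u v,
      cond x (cond y z u) v = cond (cond x y v) z (cond x u v)) :
    (∀ x, cond ff x ff = ff) ∧ (∀ x, cond tt x ff = x) := by
  have mid : ∀ a x v, cond a (cond tt x ff) v = cond a x v := by
    intro a x v
    rw [hCP4, hCP1, hCP2]
  have g2 : ∀ x, cond tt x ff = x := by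
    intro x
    have h := hCP3s tt (cond tt x ff) ff
    simp only [mid] at h
    rw [hCP3s, hCP1, hCP1] at h
    exact h.symm
  have g1 : ∀ x, cond ff x ff = ff := by
    intro x
    have hxx : cond x x ff = x := by
      have h := hCP3s tt x ff
      rwa [g2, hCP1] at h
    have hA : cond (cond ff x ff) x ff = ff := by
      have h := hCP3s ff x ff
      rwa [hCP2] at h
    calc cond ff x ff = cond ff (cond x x ff) ff := by rw [hxx]
      _ = cond (cond ff x ff) x (cond ff ff ff) := hCP4 ff x x ff ff
      _ = ff := by rw [hCP2, hA]
  exact ⟨g1, g2⟩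
end

section
/- In any model of the axioms CPs = {CP1, CP2, CP3, CP4, CPmem, CPstat} for the ternary conditional, defining x ∧' y := y ◁ x ▷ F, sequential conjunction is commutative: x ∧' y = y ∧' x. -/
theorem cps_and_comm {M : Type*} (tt ff : M) (cond : M → M → M → M)
    (hCP1 : ∀ x y, cond x tt y = x)
    (hCP2 : ∀ x y, cond x ff y = y)
    (hCP3 : ∀ x, cond tt x ff = x)
    (hCP4 : ∀ x y z u v,
      cond x (cond y z u) v = cond (cond x y v) z (cond x u v))
    (hCPmem : ∀ x y z u v w,
      cond x y (cond z u (cond v y w)) = cond x y (cond z u w))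
    (hCPstat : ∀ x, cond ff x ff = ff) :
    ∀ x y, cond y x ff = cond x y ff := by
  -- flip: a conditional on a negated condition swaps its branches
  have flip : ∀ a c b, cond a (cond ff c tt) b = cond b c a := by
    intro a c b; rw [hCP4, hCP1, hCP2]
  -- D4: under a false outer test of b, an inner test of b (in condition
  -- position of the else branch) evaluates to false
  have D4 : ∀ x y z u v w,
      cond x y (cond (cond v y w) u z) = cond x y (cond w u z) := by
    intro x y z u v w
    rw [← flip z u (cond v y w), ← flip z u w, hCPmem]
  -- D5: under a true outer test of b, an inner test of b (in condition
  -- position of the then branch) evaluates to true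
  have D5 : ∀ x y z u v w,
      cond (cond (cond v y w) u z) y x = cond (cond v u z) y x := by
    intro x y z u v w
    rw [← flip x y (cond (cond v y w) u z), ← flip x y (cond v u z),
        ← flip z u (cond v y w), ← flip z u v, ← flip w y v, hCPmem]
  -- D6: tt ◁ x ▷ tt = tt
  have D6 : ∀ x, cond tt x tt = tt := by
    intro x
    have h : tt = cond tt x tt := by
      calc tt = cond ff ff tt := (hCP2 ff tt).symm
        _ = cond ff (cond ff x ff) tt := by rw [hCPstat]
        _ = cond (cond ff ff tt) x (cond ff ff tt) := hCP4 ff ff x ff tt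
        _ = cond tt x tt := by rw [hCP2]
    exact h.symm
  -- idempotence: w ◁ y ▷ w = w
  have ID : ∀ w y, cond w y w = w := by
    intro w y
    have h := hCP4 w tt y tt w
    rw [D6, hCP1] at h
    exact h.symm
  -- E3: x ◁ y ▷ Z = (y ◁ x ▷ F) ◁ y ▷ Z
  have E3 : ∀ x y Z, cond x y Z = cond (cond y x ff) y Z := by
    intro x y Z
    have h := D5 Z y ff x tt ff
    rw [hCP3, hCP3] at h
    exact h.symm
  intro x y
  have key : cond (cond y x ff) y ff = cond y x ff := by
    calc cond (cond y x ff) y ff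
        = cond (cond y x ff) y (cond ff x ff) := by rw [hCPstat]
      _ = cond (cond y x ff) y (cond (cond tt y ff) x ff) := by rw [D4]
      _ = cond (cond y x ff) y (cond y x ff) := by rw [hCP3]
      _ = cond y x ff := ID _ _
  calc cond y x ff = cond (cond y x ff) y ff := key.symm
    _ = cond x y ff := (E3 x y ff).symm
end
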